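/- Suppose X is a spiny symmetric set with dim(X) ≥ n. Then the degree of sk_{n−1} X equals exactly n. -/

import Mathlib

open CategoryTheory Opposite

/-- The skeleton of the category of finite nonempty sets: objects are natural
numbers `n`, standing for `[n] = {0, …, n}`, morphisms are all functions. -/
def Ups : Type := ℕ

/-- The natural number underlying an object of `Ups`. -/
def Ups.toNat : Ups → ℕ := fun n => n

/-- The object `[n]` of `Ups`. -/
def Ups.of : ℕ → Ups := fun n => n

instance : Category Ups where
  Hom n m := Fin (n.toNat + 1) → Fin (m.toNat + 1)
  id _ := _root_.id
  comp f g := g ∘ f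

/-- A symmetric set is a presheaf on `Ups`. -/
abbrev SymmSet := Upsᵒᵖ ⥤ Type

/-- The map `ε_{ij} : [1] → [n]` sending `0, 1` to `i, j`. -/
def eps (n : ℕ) (i j : Fin (n + 1)) : Ups.of 1 ⟶ Ups.of n :=
  fun k => if k = 0 then i else j

/-- The set of `n`-simplices of a symmetric set. -/
abbrev simp (X : SymmSet) (n : ℕ) : Type := X.obj (op (Ups.of n))

/-- The Bousfield–Segal map `𝓑ₙ : Xₙ → X₁ⁿ`, `x ↦ (ε₀₁*x, …, ε₀ₙ*x)`. -/
def BS (X : SymmSet) (n : ℕ) (x : simp X n) : Fin n → simp X 1 :=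
  fun k => X.map (eps n 0 k.succ).op x

/-- The Segal map `𝓔ₙ : Xₙ → X₁ⁿ`, `x ↦ (ε₀₁*x, ε₁₂*x, …, ε₍ₙ₋₁₎ₙ*x)`. -/
def ES (X : SymmSet) (n : ℕ) (x : simp X n) : Fin n → simp X 1 :=
  fun k => X.map (eps n k.castSucc k.succ).op x

/-- The canonical map `μ_X` to matrices, `x ↦ (ε_{ij}* x)_{ij}`. -/
def muMat (X : SymmSet) (n : ℕ) (x : simp X n) :
    Fin (n + 1) → Fin (n + 1) → simp X 1 :=
  fun i j => X.map (eps n i j).op x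

/-- A symmetric set is spiny if all Bousfield–Segal maps are injective. -/
def Spiny (X : SymmSet) : Prop := ∀ n, Function.Injective (BS X n)
/-- The matrix symmetric set `Mat(S)`: `n`-simplices are functions `[n]×[n] → S`. -/
def MatS (S : Type) : SymmSet where
  obj k := Fin (k.unop.toNat + 1) → Fin (k.unop.toNat + 1) → S
  map f := TypeCat.ofHom fun M => fun a b => M (f.unop a) (f.unop b)
  map_id := by intros; rfl
  map_comp := by intros; rfl

/-- An `n`-simplex is degenerate if it is `ρ* y` for a noninvertible surjection
`ρ : [n] ↠ [m]` and an `m`-simplex `y`. -/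
def Degen (X : SymmSet) (n : ℕ) (x : simp X n) : Prop :=
  ∃ (m : ℕ) (ρ : Ups.of n ⟶ Ups.of m), Function.Surjective ρ ∧
    ¬ Function.Bijective ρ ∧ ∃ y : simp X m, x = X.map ρ.op y

/-- The `d`-skeleton of a symmetric set, as a symmetric subset. -/
def skel (X : SymmSet) (d : ℕ) : SymmSet where
  obj k := {x : X.obj k // ∃ (i : ℕ) (_ : i ≤ d) (α : k.unop ⟶ Ups.of i)
      (y : simp X i), x = X.map α.op y}
  map f := TypeCat.ofHom fun x => ⟨X.map f x.1, by
    obtain ⟨i, hi, α, y, hy⟩ := x.2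
    refine ⟨i, hi, f.unop ≫ α, y, ?_⟩
    rw [hy, ← FunctorToTypes.map_comp_apply]
    rfl⟩
  map_id := by
    intro k; ext x
    exact X.map_id_apply k x.1
  map_comp := by
    intro k k' k'' f g; ext x
    exact X.map_comp_apply f g x.1

/-- A symmetric set is `d`-skeletal when all simplices above dimension `d`
are degenerate. -/
def SkeletalLE (X : SymmSet) (d : ℕ) : Prop :=
  ∀ n, d < n → ∀ x : simp X n, Degen X n x

/-- `X` has dimension `d` when `d` is the least integer such that `X` is
`d`-skeletal. -/
def HasDim (X : SymmSet) (d : ℕ) : Prop :=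
  IsLeast {m | SkeletalLE X m} d

/-- A symmetric set is reduced when it has exactly one `0`-simplex. -/
def Reduced (X : SymmSet) : Prop :=
  Nonempty (simp X 0) ∧ Subsingleton (simp X 0)

/-- A partial group is a reduced spiny symmetric set. -/
def IsPartialGroup (X : SymmSet) : Prop := Reduced X ∧ Spiny X

/-- A partial group is trivial when it has no nonidentity elements. -/
def TrivialPG (X : SymmSet) : Prop := Subsingleton (simp X 1)

/-- The order of a partial group: the number of its elements (edges). -/
noncomputable def orderPG (X : SymmSet) : ℕ := Nat.card (simp X 1)

/-- An edge is an identity if it is in the image of the degeneracy `X₀ → X₁`. -/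
def isIdent (X : SymmSet) (e : simp X 1) : Prop :=
  ∃ v : simp X 0, e = X.map (Quiver.Hom.op
    ((fun _ => 0 : Fin 2 → Fin 1) : Ups.of 1 ⟶ Ups.of 0)) v

/-- The source vertex of an edge. -/
def srcE (X : SymmSet) (e : simp X 1) : simp X 0 :=
  X.map (Quiver.Hom.op ((fun _ => 0 : Fin 1 → Fin 2) : Ups.of 0 ⟶ Ups.of 1)) e

/-- `X` has (higher Segal) degree at most `k`: for each starry word `w` of
length `n+1 ≥ k+1`, if the last `k+1` faces `d_{n+1-k} w, …, d_{n+1} w` of `w`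
are Bousfield–Segal images of simplices, then so is `w`. -/
def HasDegLE (X : SymmSet) (k : ℕ) : Prop :=
  ∀ n, k ≤ n → ∀ w : Fin (n + 1) → simp X 1,
    (∀ a b, srcE X (w a) = srcE X (w b)) →
    (∀ i : Fin (n + 1), n ≤ (i : ℕ) + k →
      (fun j : Fin n => w (i.succAbove j)) ∈ Set.range (BS X n)) →
    w ∈ Set.range (BS X (n + 1))

/-- `X` has degree `d`: `d` is the least `k ≥ 1` with `HasDegLE X k`. -/
def DegreeIs (X : SymmSet) (d : ℕ) : Prop :=
  IsLeast {k | 1 ≤ k ∧ HasDegLE X k} d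

/-- `W`, with structure maps `i, j`, is a coproduct of `Y` and `Z` in the
category of partial groups. -/
def IsPGCoproduct (W Y Z : SymmSet) (i : Y ⟶ W) (j : Z ⟶ W) : Prop :=
  ∀ V : SymmSet, IsPartialGroup V → ∀ (f : Y ⟶ V) (g : Z ⟶ V),
    ∃! h : W ⟶ V, i ≫ h = f ∧ j ≫ h = g

/-- The nerve of a group `G`, as a symmetric set: an `n`-simplex is a matrix
`(g_{ij})` of elements of `G` satisfying the cocycle condition. -/
def grpNerve (G : Type) [Group G] : SymmSet where
  obj k := {M : Fin (k.unop.toNat + 1) → Fin (k.unop.toNat + 1) → G //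
      ∀ i j l, M i j * M j l = M i l}
  map f := TypeCat.ofHom fun M => ⟨fun a b => M.1 (f.unop a) (f.unop b),
    fun i j l => M.2 (f.unop i) (f.unop j) (f.unop l)⟩
  map_id := by intro k; rfl
  map_comp := by intros; rfl

namespace DegProof

lemma map_map (X : SymmSet) {a b c : Ups} (f : a ⟶ b) (g : b ⟶ c) (y : X.obj (op c)) :
    X.map f.op (X.map g.op y) = X.map (f ≫ g).op y := by
  rw [← FunctorToTypes.map_comp_apply, ← op_comp]

lemma eps_comp {n m : ℕ} (i j : Fin (n+1)) (α : Ups.of n ⟶ Ups.of m) :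
    eps n i j ≫ α = eps m (α i) (α j) := by
  funext k
  show α (eps n i j k) = (if k = 0 then α i else α j)
  by_cases h : k = 0 <;> simp [eps, h]

lemma succAbove_val {r : ℕ} (p : Fin (r+1)) (t : Fin r) :
    (p.succAbove t).1 = if t.1 < p.1 then t.1 else t.1 + 1 := by
  rw [Fin.succAbove]
  rcases lt_or_ge (t.1 : ℕ) p.1 with h | h
  · have hc : t.castSucc < p := by rw [Fin.lt_def, Fin.coe_castSucc]; exact h
    rw [if_pos hc, if_pos h]; rfl
  · have hc : ¬ t.castSucc < p := by rw [Fin.lt_def, Fin.coe_castSucc]; omega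
    rw [if_neg hc, if_neg (by omega : ¬ (t.1 : ℕ) < p.1)]; rfl

end DegProof
namespace DegProof

@[simp] lemma toNat_of (n : ℕ) : (Ups.of n).toNat = n := rfl

/-- Collapse surjection `[M+1] → [M]` sending `B ↦ V` and skipping over `B`. -/
def colρ (M : ℕ) (B V : Fin (M+2)) (h : V < B) : Fin (M+2) → Fin (M+1) :=
  fun c => if h1 : c.1 < B.1 then ⟨c.1, by have := B.2; omega⟩
    else if c = B then ⟨V.1, by have := B.2; have : V.1 < B.1 := h; omega⟩
    else ⟨c.1 - 1, by have := c.2; omega⟩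

def colι (M : ℕ) (B : Fin (M+2)) : Fin (M+1) → Fin (M+2) :=
  fun d => if d.1 < B.1 then ⟨d.1, by have := d.2; omega⟩ else ⟨d.1 + 1, by have := d.2; omega⟩

lemma colρ_val (M : ℕ) (B V : Fin (M+2)) (h : V < B) (c : Fin (M+2)) :
    (colρ M B V h c).1 = if c.1 < B.1 then c.1 else if c.1 = B.1 then V.1 else c.1 - 1 := by
  simp only [colρ]
  split_ifs <;> simp_all [Fin.ext_iff]

lemma colι_val (M : ℕ) (B : Fin (M+2)) (d : Fin (M+1)) :
    (colι M B d).1 = if d.1 < B.1 then d.1 else d.1 + 1 := by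
  simp only [colι]
  split_ifs <;> rfl

lemma colρ_surj (M : ℕ) (B V : Fin (M+2)) (h : V < B) :
    Function.Surjective (colρ M B V h) := by
  have hVB : V.1 < B.1 := h
  have hB := B.2
  intro d
  rcases lt_or_ge (d.1 : ℕ) B.1 with hd | hd
  · exact ⟨⟨d.1, by have := d.2; omega⟩, by rw [Fin.ext_iff, colρ_val]; split_ifs <;> simp_all <;> omega⟩
  · exact ⟨⟨d.1 + 1, by have := d.2; omega⟩, by rw [Fin.ext_iff, colρ_val]; split_ifs <;> simp_all <;> omega⟩

lemma colρ_not_bij (M : ℕ) (B V : Fin (M+2)) (h : V < B) :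
    ¬ Function.Bijective (colρ M B V h) := by
  rintro ⟨hinj, -⟩
  have hVB : V.1 < B.1 := h
  have h1 : colρ M B V h V = colρ M B V h B := by
    rw [Fin.ext_iff, colρ_val, colρ_val]
    split_ifs <;> omega
  have := hinj h1
  rw [Fin.ext_iff] at this
  omega

lemma colcomp_eq (M : ℕ) (B V : Fin (M+2)) (h : V < B) (c : Fin (M+2)) :
    colι M B (colρ M B V h c) = if c = B then V else c := by
  have hVB : V.1 < B.1 := h
  rw [Fin.ext_iff, colι_val, colρ_val]
  by_cases hcb : c = B
  · rw [if_pos hcb, hcb]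
    split_ifs <;> omega
  · rw [if_neg hcb]
    have : c.1 ≠ B.1 := fun hc => hcb (Fin.ext hc)
    have := c.2
    split_ifs <;> omega

lemma spiny_collapse (X : SymmSet) (hX : Spiny X) (M : ℕ) (x : simp X (M+1))
    (B V : Fin (M+2)) (h : V < B)
    (he : X.map (eps (M+1) 0 B).op x = X.map (eps (M+1) 0 V).op x) :
    Degen X (M+1) x := by
  set ρ : Ups.of (M+1) ⟶ Ups.of M := colρ M B V h with hρ
  set ι : Ups.of M ⟶ Ups.of (M+1) := colι M B with hι
  have hcomp : ∀ c : Fin (M+2), (ρ ≫ ι) c = if c = B then V else c :=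
    colcomp_eq M B V h
  have hB0 : B ≠ 0 := by
    intro hB; rw [hB] at h; exact absurd h (Fin.not_lt_zero V)
  have hBS : BS X (M+1) (X.map (ρ ≫ ι).op x) = BS X (M+1) x := by
    funext k
    show X.map (eps (M+1) 0 k.succ).op (X.map (ρ ≫ ι).op x) = X.map (eps (M+1) 0 k.succ).op x
    rw [map_map, eps_comp]
    erw [show (ρ ≫ ι) 0 = 0 from (hcomp 0).trans (if_neg (fun hc => hB0 hc.symm))]
    by_cases hk : k.succ = B
    · erw [show (ρ ≫ ι) k.succ = V from (hcomp _).trans (if_pos hk), hk, he]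
      rfl
    · erw [show (ρ ≫ ι) k.succ = k.succ from (hcomp _).trans (if_neg hk)]
      rfl
  have hx := hX (M+1) hBS
  exact ⟨M, ρ, colρ_surj M B V h, colρ_not_bij M B V h,
    X.map ι.op x, by rw [map_map]; exact hx.symm⟩

end DegProof
namespace DegProof

def sigmaUp : Ups.of 1 ⟶ Ups.of 0 := ((fun _ => 0 : Fin 2 → Fin 1) : Ups.of 1 ⟶ Ups.of 0)

def constUp (m : ℕ) (i : Fin (m+1)) : Ups.of 0 ⟶ Ups.of m := fun _ => i

lemma srcE_eps (X : SymmSet) (m : ℕ) (i j : Fin (m+1)) (x : simp X m) :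
    srcE X (X.map (eps m i j).op x) = X.map (constUp m i).op x := by
  show X.map (Quiver.Hom.op ((fun _ => 0 : Fin 1 → Fin 2) : Ups.of 0 ⟶ Ups.of 1))
      (X.map (eps m i j).op x) = _
  erw [map_map]
  have h : (((fun _ => 0 : Fin 1 → Fin 2) : Ups.of 0 ⟶ Ups.of 1) ≫ eps m i j)
      = constUp m i := by
    funext k
    show (if (0 : Fin 2) = 0 then i else j) = i
    simp
  erw [h]
  rfl

lemma eps00_src (X : SymmSet) (m : ℕ) (x : simp X m) :
    X.map (eps m 0 0).op x = X.map sigmaUp.op (X.map (constUp m 0).op x) := by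
  rw [map_map]
  have h : sigmaUp ≫ constUp m 0 = eps m 0 0 := by
    funext k
    show (0 : Fin (m+1)) = (if k = 0 then 0 else 0)
    split_ifs <;> rfl
  rw [h]

lemma isIdent_eps00 (X : SymmSet) (m : ℕ) (x : simp X m) :
    isIdent X (X.map (eps m 0 0).op x) :=
  ⟨X.map (constUp m 0).op x, eps00_src X m x⟩

lemma src_sigma (X : SymmSet) (v : simp X 0) : srcE X (X.map sigmaUp.op v) = v := by
  show X.map (Quiver.Hom.op ((fun _ => 0 : Fin 1 → Fin 2) : Ups.of 0 ⟶ Ups.of 1))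
      (X.map sigmaUp.op v) = v
  erw [map_map]
  have h : (((fun _ => 0 : Fin 1 → Fin 2) : Ups.of 0 ⟶ Ups.of 1) ≫ sigmaUp)
      = 𝟙 (Ups.of 0) := by
    funext k
    show (0 : Fin 1) = k
    exact Subsingleton.elim _ _
  erw [h]
  show X.map (𝟙 (op (Ups.of 0))) v = v
  rw [FunctorToTypes.map_id_apply]

lemma ident_src (X : SymmSet) (e : simp X 1) (h : isIdent X e) :
    e = X.map sigmaUp.op (srcE X e) := by
  obtain ⟨v, rfl⟩ := h
  show X.map sigmaUp.op v = X.map sigmaUp.op (srcE X (X.map sigmaUp.op v))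
  rw [src_sigma]

lemma degen_letters (X : SymmSet) {m : ℕ} (x : simp X m) (hd : Degen X m x) :
    ∃ a b : Fin (m+1), a < b ∧
      X.map (eps m 0 b).op x = X.map (eps m 0 a).op x := by
  obtain ⟨p, ρ, hsurj, hnbij, y, hxy⟩ := hd
  have hninj : ¬ Function.Injective ρ := fun hinj => hnbij ⟨hinj, hsurj⟩
  obtain ⟨a, b, he, hne⟩ := Function.not_injective_iff.mp hninj
  have key : ∀ a b : Fin (m+1), ρ a = ρ b →
      X.map (eps m 0 b).op x = X.map (eps m 0 a).op x := by
    intro a b he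
    rw [hxy, map_map, map_map, eps_comp, eps_comp, he]
  rcases hne.lt_or_gt with h | h
  · exact ⟨a, b, h, key a b he⟩
  · exact ⟨b, a, h, key b a he.symm⟩

end DegProof
namespace DegProof

lemma skel_map_val (X : SymmSet) (d : ℕ) {a b : Ups} (f : a ⟶ b)
    (y : (skel X d).obj (op b)) : ((skel X d).map f.op y).1 = X.map f.op y.1 := rfl

lemma skel_spiny (X : SymmSet) (hX : Spiny X) (d : ℕ) : Spiny (skel X d) := by
  intro m x y h
  apply Subtype.ext
  apply hX m
  funext k
  exact congrArg Subtype.val (congrFun h k)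

lemma skel_skeletal (X : SymmSet) (d : ℕ) : SkeletalLE (skel X d) d := by
  intro k hk x
  obtain ⟨i, hi, α, y, hy⟩ := x.2
  set S : Finset (Fin (i+1)) := Finset.univ.image α with hS
  have hSne : S.Nonempty := ⟨α 0, Finset.mem_image_of_mem α (Finset.mem_univ 0)⟩
  obtain ⟨p, hp⟩ : ∃ p, S.card = p + 1 := by
    have := Finset.card_pos.mpr hSne
    exact ⟨S.card - 1, by omega⟩
  have hci : S.card ≤ i + 1 := by
    have := Finset.card_le_univ S
    simpa using this
  set e := S.orderIsoOfFin hp with he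
  set ρ : Ups.of k ⟶ Ups.of p :=
    (fun t => e.symm ⟨α t, Finset.mem_image_of_mem α (Finset.mem_univ t)⟩ :
      Fin (k+1) → Fin (p+1)) with hρ
  set ι : Ups.of p ⟶ Ups.of i := (fun s => (e s).1 : Fin (p+1) → Fin (i+1)) with hι
  have hcomp : ∀ t : Fin (k+1), (ρ ≫ ι) t = α t := by
    intro t
    show (e (e.symm _)).1 = α t
    rw [OrderIso.apply_symm_apply]
  have hsurj : Function.Surjective ρ := by
    intro s
    obtain ⟨t, -, ht⟩ := Finset.mem_image.mp (e s).2
    refine ⟨t, ?_⟩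
    show e.symm _ = s
    rw [show (⟨α t, Finset.mem_image_of_mem α (Finset.mem_univ t)⟩ : S) = e s from
      Subtype.ext ht]
    exact e.symm_apply_apply s
  have hnbij : ¬ Function.Bijective ρ := by
    rintro ⟨hinj, -⟩
    have := Fintype.card_le_of_injective ρ hinj
    rw [Fintype.card_fin, Fintype.card_fin] at this
    simp at this
    omega
  refine ⟨p, ρ, hsurj, hnbij, ⟨X.map ι.op y, i, hi, ι, y, rfl⟩, ?_⟩
  apply Subtype.ext
  show x.1 = X.map ρ.op (X.map ι.op y)
  rw [map_map, hy]
  exact (congrArg (fun f => X.map (Quiver.Hom.op f) y) (funext hcomp)).symm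

lemma degle_mono (Y : SymmSet) {k k' : ℕ} (h : k ≤ k') (H : HasDegLE Y k) :
    HasDegLE Y k' :=
  fun n hn w hs hf => H n (le_trans h hn) w hs (fun i hi => hf i (by omega))

end DegProof
namespace DegProof

/-- The lifting map `[m+2] → [m+1]` sending vertex `i+1` to `T` and otherwise
collapsing around it. -/
def liftφ (m : ℕ) (i : Fin (m+2)) (T : Fin (m+2)) : Fin (m+3) → Fin (m+2) :=
  fun c => if c = i.succ then T
    else if h1 : c.1 ≤ i.1 then ⟨c.1, by have := i.2; omega⟩
    else ⟨c.1 - 1, by have := c.2; omega⟩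

lemma lift_word (Y : SymmSet) (m : ℕ) (w : Fin (m+2) → simp Y 1) (i : Fin (m+2))
    (x : simp Y (m+1)) (hx : ∀ j : Fin (m+1), BS Y (m+1) x j = w (i.succAbove j))
    (T : Fin (m+2)) (hT : Y.map (eps (m+1) 0 T).op x = w i) :
    w ∈ Set.range (BS Y (m+2)) := by
  set φ : Ups.of (m+2) ⟶ Ups.of (m+1) := liftφ m i T with hφ
  refine ⟨Y.map φ.op x, ?_⟩
  funext k
  show Y.map (eps (m+2) 0 k.succ).op (Y.map φ.op x) = w k
  rw [map_map, eps_comp]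
  have h0 : φ 0 = 0 := by
    show liftφ m i T 0 = 0
    rw [liftφ]
    rw [if_neg (by exact fun hc => (Fin.succ_ne_zero i) hc.symm)]
    simp
  erw [h0]
  by_cases hk : k = i
  · have hφk : φ k.succ = T := by
      show liftφ m i T k.succ = T
      rw [liftφ, if_pos (by rw [hk])]
    rw [hφk, hk, ← hT]
    rfl
  · have hki : (k.1 : ℕ) ≠ i.1 := fun hc => hk (Fin.ext hc)
    have hi2 := i.2
    have hk2 := k.2
    rcases lt_or_ge (k.1 : ℕ) i.1 with hlt | hge
    · set j : Fin (m+1) := ⟨k.1, by omega⟩ with hj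
      have hjv : (j.1 : ℕ) = k.1 := rfl
      have hsa : i.succAbove j = k := by
        apply Fin.ext
        rw [succAbove_val]
        split_ifs <;> omega
      have hφk : φ k.succ = j.succ := by
        show liftφ m i T k.succ = j.succ
        rw [liftφ, if_neg (by
          intro hc
          have := congrArg Fin.val hc
          simp [Fin.val_succ] at this
          omega)]
        rw [dif_pos (by simp [Fin.val_succ]; omega)]
        apply Fin.ext
        simp [Fin.val_succ]
        exact hjv.symm
      rw [hφk, ← hsa, ← hx j]
      rfl
    · set j : Fin (m+1) := ⟨k.1 - 1, by omega⟩ with hj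
      have hjv : (j.1 : ℕ) = k.1 - 1 := rfl
      have hk1 : 1 ≤ (k.1 : ℕ) := by omega
      have hsa : i.succAbove j = k := by
        apply Fin.ext
        rw [succAbove_val]
        split_ifs <;> omega
      have hφk : φ k.succ = j.succ := by
        show liftφ m i T k.succ = j.succ
        rw [liftφ, if_neg (by
          intro hc
          have := congrArg Fin.val hc
          simp [Fin.val_succ] at this
          omega)]
        rw [dif_neg (by simp [Fin.val_succ]; omega)]
        apply Fin.ext
        simp [Fin.val_succ]
        omega
      rw [hφk, ← hsa, ← hx j]
      rfl

/-- The face inclusion `[m] → [m+1]` skipping vertex `p+1`. -/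
def dmapf (m : ℕ) (p : Fin (m+1)) : Fin (m+1) → Fin (m+2) :=
  fun c => p.succ.succAbove c

def dmapU (m : ℕ) (p : Fin (m+1)) : Ups.of m ⟶ Ups.of (m+1) := dmapf m p

lemma BS_face (Y : SymmSet) (m : ℕ) (x : simp Y (m+1)) (p : Fin (m+1)) :
    BS Y m (Y.map (dmapU m p).op x)
      = fun l : Fin m => BS Y (m+1) x (p.succAbove l) := by
  set δ : Ups.of m ⟶ Ups.of (m+1) := dmapU m p with hδ
  funext l
  show Y.map (eps m 0 l.succ).op (Y.map δ.op x) = _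
  rw [map_map, eps_comp]
  have h0 : δ 0 = 0 := by
    apply Fin.ext
    show (p.succ.succAbove 0).1 = 0
    rw [succAbove_val]
    simp [Fin.val_succ]
  have h1 : δ l.succ = (p.succAbove l).succ := by
    apply Fin.ext
    show (p.succ.succAbove l.succ).1 = _
    rw [succAbove_val]
    simp only [Fin.val_succ, succAbove_val]
    split_ifs <;> omega
  show Y.map (eps (m+1) (δ 0) (δ l.succ)).op x = _
  rw [h0, h1]
  rfl

end DegProof
namespace DegProof

theorem deg_of_skeletal (Y : SymmSet) (hs : Spiny Y) (d : ℕ) (hsk : SkeletalLE Y d) :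
    HasDegLE Y (d+1) := by
  intro n
  induction n using Nat.strong_induction_on with
  | _ n IH =>
  intro hn w hstar hfaces
  obtain ⟨m, rfl⟩ : ∃ m, n = m+1 := ⟨n-1, by omega⟩
  have hm : d ≤ m := by omega
  have hlast := hfaces (Fin.last (m+1)) (by simp only [Fin.val_last]; omega)
  obtain ⟨x, hx⟩ := hlast
  have hdeg : Degen Y (m+1) x := hsk (m+1) (by omega) x
  obtain ⟨a, b, hab, hletter⟩ := degen_letters Y x hdeg
  have hb2 := b.2
  have ha2 := a.2
  have habv : (a.1:ℕ) < b.1 := hab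
  have hb1 : 1 ≤ (b.1:ℕ) := by omega
  set kb : Fin (m+1) := ⟨b.1 - 1, by omega⟩ with hkb
  have hkbv : (kb.1:ℕ) = b.1 - 1 := rfl
  have hkbsucc : kb.succ = b := Fin.ext (by rw [Fin.val_succ, hkbv]; omega)
  set p : Fin (m+2) := kb.castSucc with hp
  have hpv : (p.1:ℕ) = kb.1 := rfl
  have hlet : ∀ k : Fin (m+1), BS Y (m+1) x k = w k.castSucc := by
    intro k
    rw [congrFun hx k]
    apply congrArg w
    apply Fin.ext
    rw [succAbove_val]
    have := k.2
    rw [if_pos (by simp only [Fin.val_last]; omega)]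
    rfl
  have hfacep : (fun j : Fin (m+1) => w (p.succAbove j)) ∈ Set.range (BS Y (m+1)) := by
    by_cases hcase : m+1 ≤ (p.1:ℕ) + (d+1)
    · exact hfaces p hcase
    · push_neg at hcase
      have hm1 : d + 1 ≤ m := by omega
      refine IH m (by omega) hm1 _ (fun s t => hstar _ _) ?_
      intro j hj
      obtain ⟨z, hz⟩ := hfaces j.succ (by simp [Fin.val_succ]; omega)
      refine ⟨Y.map (dmapU m kb).op z, ?_⟩
      rw [BS_face]
      funext l
      show BS Y (m+1) z (kb.succAbove l) = w (p.succAbove (j.succAbove l))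
      rw [congrFun hz (kb.succAbove l)]
      apply congrArg w
      apply Fin.ext
      have hpj : (kb.1 : ℕ) ≤ j.1 := by omega
      have hl2 := l.2
      simp only [succAbove_val, Fin.val_succ, hp, Fin.coe_castSucc]
      split_ifs <;> omega
  obtain ⟨x', hx'⟩ := hfacep
  have hwp : w p = Y.map (eps (m+1) 0 b).op x := by
    rw [hp, ← hlet kb]
    show Y.map (eps (m+1) 0 kb.succ).op x = _
    rw [hkbsucc]
  by_cases ha0 : a = 0
  · have hwid : w p = Y.map (eps (m+1) 0 0).op x := by
      rw [hwp, hletter, ha0]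
    have hident : isIdent Y (w p) := by
      rw [hwid]; exact isIdent_eps00 Y (m+1) x
    apply lift_word Y m w p x' (fun j => congrFun hx' j) 0
    rw [eps00_src]
    have h3 : srcE Y (BS Y (m+1) x' 0) = Y.map (constUp (m+1) 0).op x' := by
      show srcE Y (Y.map (eps (m+1) 0 (0:Fin (m+1)).succ).op x') = _
      rw [srcE_eps]
    rw [← h3, congrFun hx' 0, hstar (p.succAbove 0) p, ← ident_src Y (w p) hident]
  · have ha1 : 1 ≤ (a.1:ℕ) := by
      rcases Nat.eq_zero_or_pos a.1 with h | h
      · exact absurd (Fin.ext h) ha0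
      · exact h
    set ka : Fin (m+1) := ⟨a.1 - 1, by omega⟩ with hka
    have hkav : (ka.1:ℕ) = a.1 - 1 := rfl
    have hkasucc : ka.succ = a := Fin.ext (by rw [Fin.val_succ, hkav]; omega)
    set q : Fin (m+2) := ka.castSucc with hq
    have hwq : w q = Y.map (eps (m+1) 0 a).op x := by
      rw [hq, ← hlet ka]
      show Y.map (eps (m+1) 0 ka.succ).op x = _
      rw [hkasucc]
    have hqp : q ≠ p := by
      intro hc
      have h5 := congrArg Fin.val hc
      simp only [hq, hp, Fin.coe_castSucc, hkav, hkbv] at h5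
      omega
    obtain ⟨j, hjq⟩ := Fin.exists_succAbove_eq hqp
    apply lift_word Y m w p x' (fun t => congrFun hx' t) j.succ
    show BS Y (m+1) x' j = w p
    rw [congrFun hx' j, hjq, hwq, ← hletter, ← hwp]

end DegProof
namespace DegProof

lemma lower_bound (X : SymmSet) (hX : Spiny X) (N : ℕ)
    (H : HasDegLE (skel X (N+1)) (N+1))
    (M : ℕ) (hM : N+2 ≤ M+1) (x : simp X (M+1)) (hxnd : ¬ Degen X (M+1) x) : False := by
  have hdist : ∀ a b : Fin (M+2), a < b →
      X.map (eps (M+1) 0 b).op x ≠ X.map (eps (M+1) 0 a).op x :=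
    fun a b hab h => hxnd (spiny_collapse X hX M x b a hab h)
  have hnid : ∀ b : Fin (M+2), 0 < b → ¬ isIdent X (X.map (eps (M+1) 0 b).op x) := by
    intro b hb hid
    have h1 := ident_src X _ hid
    rw [srcE_eps] at h1
    rw [← eps00_src] at h1
    exact hdist 0 b hb h1
  set emb : Fin (N+2) → Fin (M+2) := fun k => ⟨k.1+1, by have := k.2; omega⟩ with hemb
  have hembv : ∀ k : Fin (N+2), ((emb k).1 : ℕ) = k.1 + 1 := fun k => rfl
  set w : Fin (N+2) → simp (skel X (N+1)) 1 := fun k =>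
    ⟨X.map (eps (M+1) 0 (emb k)).op x, 1, by omega, 𝟙 (Ups.of 1),
      X.map (eps (M+1) 0 (emb k)).op x,
      by rw [op_id, FunctorToTypes.map_id_apply]⟩ with hw
  have hwval : ∀ k : Fin (N+2), (w k).1 = X.map (eps (M+1) 0 (emb k)).op x :=
    fun k => rfl
  have hstar : ∀ s t, srcE (skel X (N+1)) (w s) = srcE (skel X (N+1)) (w t) := by
    intro s t
    apply Subtype.ext
    show srcE X (X.map (eps (M+1) 0 (emb s)).op x)
      = srcE X (X.map (eps (M+1) 0 (emb t)).op x)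
    rw [srcE_eps, srcE_eps]
  have hfaces : ∀ i : Fin (N+2), N+1 ≤ (i.1:ℕ) + (N+1) →
      (fun j : Fin (N+1) => w (i.succAbove j)) ∈
        Set.range (BS (skel X (N+1)) (N+1)) := by
    intro i _
    set ψ : Ups.of (N+1) ⟶ Ups.of (M+1) :=
      (fun t => ⟨(i.succ.succAbove t).1, by have := (i.succ.succAbove t).2; omega⟩ :
        Fin (N+2) → Fin (M+2)) with hψ
    refine ⟨⟨X.map ψ.op x, N+1, le_rfl, 𝟙 (Ups.of (N+1)), X.map ψ.op x,
      by rw [op_id, FunctorToTypes.map_id_apply]⟩, ?_⟩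
    funext j
    apply Subtype.ext
    show X.map (eps (N+1) 0 j.succ).op (X.map ψ.op x)
      = X.map (eps (M+1) 0 (emb (i.succAbove j))).op x
    rw [map_map, eps_comp]
    have h0 : ψ 0 = 0 := Fin.ext (by
      show (i.succ.succAbove 0).1 = 0
      rw [succAbove_val]
      simp [Fin.val_succ])
    have h1 : ψ j.succ = emb (i.succAbove j) := Fin.ext (by
      show (i.succ.succAbove j.succ).1 = (emb (i.succAbove j)).1
      rw [hembv]
      simp only [succAbove_val, Fin.val_succ]
      split_ifs <;> omega)
    erw [h0, h1]
    rfl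
  obtain ⟨y, hy⟩ := H (N+1) le_rfl w hstar hfaces
  obtain ⟨i', hi', α, t, hyt⟩ := y.2
  have hninj : ¬ Function.Injective α := by
    intro hinj
    have hcard := Fintype.card_le_of_injective α hinj
    rw [Fintype.card_fin, Fintype.card_fin] at hcard
    simp at hcard
    omega
  obtain ⟨c1, c2, hc, hne⟩ := Function.not_injective_iff.mp hninj
  have hlet : ∀ k : Fin (N+2), X.map (eps (N+2) 0 k.succ).op y.1
      = X.map (eps (M+1) 0 (emb k)).op x :=
    fun k => congrArg Subtype.val (congrFun hy k)
  have key : ∀ a b : Fin (N+3), a < b → α a = α b → False := by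
    intro a b hab he
    have hcol : X.map (eps (N+2) 0 b).op y.1 = X.map (eps (N+2) 0 a).op y.1 := by
      rw [hyt, map_map, map_map, eps_comp, eps_comp, he]
    have hb2 := b.2
    have habv : (a.1:ℕ) < b.1 := hab
    set kb2 : Fin (N+2) := ⟨b.1-1, by omega⟩ with hkb2
    have hkbs : kb2.succ = b := Fin.ext (by
      rw [Fin.val_succ]
      show b.1-1+1 = b.1
      omega)
    by_cases ha0 : a = 0
    · have h1 : X.map (eps (M+1) 0 (emb kb2)).op x
          = X.map (eps (N+2) 0 0).op y.1 := by
        rw [← hlet kb2, hkbs, hcol, ha0]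
      refine hnid (emb kb2) ?_ (by rw [h1]; exact isIdent_eps00 X (N+2) y.1)
      simp only [Fin.lt_def, Fin.val_zero, hembv]
      omega
    · have ha1 : 1 ≤ (a.1:ℕ) := by
        rcases Nat.eq_zero_or_pos a.1 with h | h
        · exact absurd (Fin.ext h) ha0
        · exact h
      set ka2 : Fin (N+2) := ⟨a.1-1, by omega⟩ with hka2
      have hkas : ka2.succ = a := Fin.ext (by
        rw [Fin.val_succ]
        show a.1-1+1 = a.1
        omega)
      have h1 : X.map (eps (M+1) 0 (emb kb2)).op x
          = X.map (eps (M+1) 0 (emb ka2)).op x := by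
        rw [← hlet kb2, ← hlet ka2, hkbs, hkas, hcol]
      refine hdist (emb ka2) (emb kb2) ?_ h1
      rw [Fin.lt_def, hembv, hembv]
      show a.1-1+1 < b.1-1+1
      omega
  rcases hne.lt_or_gt with h | h
  · exact key c1 c2 h hc
  · exact key c2 c1 h hc.symm

end DegProof

/-- If `X` is a spiny symmetric set of dimension at least `n` (i.e. `X` is not
`(n-1)`-skeletal), then the degree of its `(n-1)`-skeleton is exactly `n`. -/
theorem degree_skel_eq (X : SymmSet) (hX : Spiny X) (n : ℕ) (hn : 1 ≤ n)
    (hdim : ¬ SkeletalLE X (n - 1)) :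
    DegreeIs (skel X (n - 1)) n := by
  obtain ⟨n', rfl⟩ : ∃ n', n = n'+1 := ⟨n-1, by omega⟩
  constructor
  · exact ⟨by omega,
      DegProof.deg_of_skeletal (skel X n') (DegProof.skel_spiny X hX n') n'
        (DegProof.skel_skeletal X n')⟩
  · intro k hk
    by_contra hlt
    push_neg at hlt
    have hk1 := hk.1
    obtain ⟨N, rfl⟩ : ∃ N, n' = N+1 := ⟨n'-1, by omega⟩
    have H : HasDegLE (skel X (N+1)) (N+1) := DegProof.degle_mono _ (by omega) hk.2
    unfold SkeletalLE at hdim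
    push_neg at hdim
    obtain ⟨mm, hmm, x, hxnd⟩ := hdim
    obtain ⟨M, rfl⟩ : ∃ M, mm = M+1 := ⟨mm-1, by omega⟩
    exact DegProof.lower_bound X hX N H M (by omega) x hxnd
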